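/- Let V_1, ..., V_K be subspaces of GF(q)^N with dim V_k = r_k < N for all k, and suppose q ≥ K. Then there exists a vector x ∈ GF(q)^N with at most K nonzero components such that x ∉ V_k for every k. -/

import Mathlib

open Set

/-- A submodule `W` not contained in any of `K ≤ |F|` subspaces contains a point
avoiding all of them. -/
lemma avoid_subspaces {F : Type*} [Field F] [Fintype F] {M : Type*}
    [AddCommGroup M] [Module F M] :
    ∀ (K : ℕ), K ≤ Fintype.card F → ∀ (p : Fin K → Submodule F M) (W : Submodule F M),
      (∀ k, ¬ W ≤ p k) → ∃ x ∈ W, ∀ k, x ∉ p k := by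
  intro K
  induction K with
  | zero => exact fun _ _ W _ => ⟨0, W.zero_mem, fun k => k.elim0⟩
  | succ K ih =>
    intro hq p W hp
    obtain ⟨x, hxW, hx⟩ := ih (le_trans (Nat.le_succ K) hq)
      (fun k => p k.castSucc) W (fun k => hp k.castSucc)
    by_cases hlast : x ∈ p (Fin.last K)
    · obtain ⟨y, hyW, hy⟩ := Set.not_subset.mp (fun h => hp (Fin.last K) h)
      -- find c with y + c • x avoiding everything
      by_cases hall : ∀ c : F, ∃ k : Fin K, y + c • x ∈ p k.castSucc
      · exfalso
        choose f hf using hall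
        have hinj : Function.Injective f := by
          intro c c' hcc
          by_contra hne
          have h1 := hf c
          have h2 := hf c'
          rw [hcc] at h1
          have : (c - c') • x ∈ p (f c').castSucc := by
            have := (p (f c').castSucc).sub_mem h1 h2
            simpa [sub_smul] using this
          have hx' : x ∈ p (f c').castSucc := by
            have := (p (f c').castSucc).smul_mem (c - c')⁻¹ this
            rwa [smul_smul, inv_mul_cancel₀ (sub_ne_zero.mpr hne), one_smul] at this
          exact hx (f c') hx'
        have := Fintype.card_le_of_injective f hinj
        simp only [Fintype.card_fin] at this
        omega
      · push_neg at hall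
        obtain ⟨c, hc⟩ := hall
        refine ⟨y + c • x, W.add_mem hyW (W.smul_mem c hxW), ?_⟩
        intro k
        refine Fin.lastCases ?_ (fun k => hc k) k
        intro h
        exact hy (by
          have := (p (Fin.last K)).sub_mem h ((p (Fin.last K)).smul_mem c hlast)
          simpa using this)
    · refine ⟨x, hxW, ?_⟩
      intro k
      exact Fin.lastCases hlast hx k

theorem stmt_12 {F : Type*} [Field F] [Fintype F] {N K : ℕ}
    (V : Fin K → Submodule F (Fin N → F))
    (hdim : ∀ k, Module.finrank F (V k) < N)
    (hq : K ≤ Fintype.card F) :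
    ∃ x : Fin N → F, Set.ncard {i | x i ≠ 0} ≤ K ∧ ∀ k, x ∉ V k := by
  classical
  -- For each k choose a coordinate vector not in V k
  have hchoose : ∀ k, ∃ i : Fin N, Pi.single i 1 ∉ V k := by
    intro k
    by_contra h
    push_neg at h
    have htop : V k = ⊤ := by
      rw [eq_top_iff, ← (Pi.basisFun F (Fin N)).span_eq, Submodule.span_le]
      rintro _ ⟨i, rfl⟩
      simpa [Pi.basisFun_apply] using h i
    have := hdim k
    rw [htop, finrank_top, Module.finrank_fin_fun] at this
    omega
  choose j hj using hchoose
  -- W : functions supported on range j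
  set W : Submodule F (Fin N → F) :=
    Submodule.pi ((Set.range j)ᶜ) (fun _ => ⊥) with hW
  have hmemW : ∀ x, x ∈ W ↔ ∀ i, i ∉ Set.range j → x i = 0 := by
    intro x
    rw [hW, Submodule.mem_pi]
    simp only [Submodule.mem_bot, Set.mem_compl_iff]
  have hsingle : ∀ k, Pi.single (j k) 1 ∈ W := by
    intro k
    rw [hmemW]
    intro i hi
    exact Pi.single_eq_of_ne (fun h => hi ⟨k, h.symm⟩) 1
  have hnle : ∀ k, ¬ W ≤ V k := fun k h => hj k (h (hsingle k))
  obtain ⟨x, hxW, hx⟩ := avoid_subspaces K hq V W hnle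
  refine ⟨x, ?_, hx⟩
  have hsub : {i | x i ≠ 0} ⊆ Set.range j := by
    intro i hi
    by_contra h
    exact hi ((hmemW x).mp hxW i h)
  calc {i | x i ≠ 0}.ncard ≤ (Set.range j).ncard :=
        Set.ncard_le_ncard hsub (Set.finite_range j)
    _ ≤ K := by
        have : Set.range j = ↑(Finset.image j Finset.univ) := by simp
        rw [this, Set.ncard_coe_finset]
        exact Finset.card_image_le.trans (by simp)
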